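/- The generalized Laguerre polynomials are orthogonal on [0,∞) with respect to the weight x^α e^{-x}: ∫_0^∞ x^α e^{-x} L_m^{(α)}(x) L_n^{(α)}(x) dx = (Γ(n+α+1)/n!) δ_{mn}, for α > -1. -/

import Mathlib

open Finset MeasureTheory

/-- The generalized Laguerre polynomial `L_n^{(α)}(x) = ∑_{k=0}^n binom(n+α, n-k) (-x)^k / k!`. -/
noncomputable def lagL (n : ℕ) (α : ℝ) (x : ℝ) : ℝ :=
  ∑ k ∈ Finset.range (n + 1),
    ((∏ i ∈ Finset.range (n - k), (α + (k : ℝ) + 1 + (i : ℝ))) / (Nat.factorial (n - k) : ℝ))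
      * (-x) ^ k / (Nat.factorial k : ℝ)

lemma alt_sum_choose (n : ℕ) :
    ∑ k ∈ range (n + 1), (-1 : ℝ) ^ k * (n.choose k : ℝ) = if n = 0 then 1 else 0 := by
  have h := congrArg (Int.cast : ℤ → ℝ) (Int.alternating_sum_range_choose (n := n))
  push_cast at h
  simpa [apply_ite (Int.cast : ℤ → ℝ)] using h

lemma T_succ (n : ℕ) (g : ℕ → ℝ) :
    ∑ k ∈ range (n + 2), (-1 : ℝ) ^ k * ((n + 1).choose k : ℝ) * g k
      = ∑ k ∈ range (n + 1), (-1 : ℝ) ^ k * (n.choose k : ℝ) * (g k - g (k + 1)) := by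
  have htop : ∑ k ∈ range (n + 1), (-1 : ℝ) ^ k * (n.choose k : ℝ) * g k
      = ∑ k ∈ range (n + 2), (-1 : ℝ) ^ k * (n.choose k : ℝ) * g k := by
    rw [Finset.sum_range_succ _ (n + 1), Nat.choose_succ_self]
    simp
  rw [Finset.sum_range_succ' (fun k => (-1 : ℝ) ^ k * ((n + 1).choose k : ℝ) * g k) (n + 1)]
  have : ∑ k ∈ range (n + 1), (-1 : ℝ) ^ k * (n.choose k : ℝ) * (g k - g (k + 1))
      = (∑ k ∈ range (n + 2), (-1 : ℝ) ^ k * (n.choose k : ℝ) * g k)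
        - ∑ k ∈ range (n + 1), (-1 : ℝ) ^ k * (n.choose k : ℝ) * g (k + 1) := by
    rw [← htop, ← Finset.sum_sub_distrib]
    exact Finset.sum_congr rfl fun k _ => by ring
  rw [this, Finset.sum_range_succ' (fun k => (-1 : ℝ) ^ k * (n.choose k : ℝ) * g k) (n + 1)]
  rw [Finset.sum_congr rfl (fun k (_ : k ∈ range (n+1)) =>
    show (-1 : ℝ) ^ (k+1) * (((n+1).choose (k+1) : ℕ) : ℝ) * g (k+1)
      = (-1 : ℝ) ^ (k+1) * ((n.choose (k+1) : ℕ) : ℝ) * g (k+1)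
        + -((-1 : ℝ) ^ k * ((n.choose k : ℕ) : ℝ) * g (k+1)) by
      push_cast [Nat.choose_succ_succ]; ring), Finset.sum_add_distrib, Finset.sum_neg_distrib]
  simp only [Nat.choose_zero_right, pow_zero, Nat.cast_one]
  ring

lemma S_eq : ∀ (j n : ℕ), j ≤ n → ∀ c : ℝ,
    ∑ k ∈ range (n + 1), (-1 : ℝ) ^ k * (n.choose k : ℝ) * ∏ i ∈ range j, (c + k + i)
      = if j = n then (-1 : ℝ) ^ n * (n.factorial : ℝ) else 0 := by
  intro j
  induction j with
  | zero =>
    intro n _ c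
    simp only [Finset.range_zero, Finset.prod_empty, mul_one, alt_sum_choose]
    rcases eq_or_ne n 0 with h | h <;> simp [h, eq_comm]
  | succ j ih =>
    intro n hn c
    obtain ⟨m, rfl⟩ : ∃ m, n = m + 1 := ⟨n - 1, by omega⟩
    have hjm : j ≤ m := by omega
    rw [show m + 1 + 1 = m + 2 from rfl, T_succ]
    have hpt : ∀ k : ℕ,
        (∏ i ∈ range (j + 1), (c + k + i)) - ∏ i ∈ range (j + 1), (c + (k + 1 : ℕ) + i)
          = -((j : ℝ) + 1) * ∏ i ∈ range j, ((c + 1) + k + i) := by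
      intro k
      rw [Finset.prod_range_succ' (fun i => (c + k + i)) j,
        Finset.prod_range_succ (fun i => (c + (k + 1 : ℕ) + i)) j]
      have h1 : ∀ i ∈ range j, (c + (k : ℝ) + (i + 1 : ℕ)) = ((c + 1) + k + i) := by
        intro i _; push_cast; ring
      have h2 : ∀ i ∈ range j, (c + ((k : ℕ) + 1 : ℕ) + (i : ℝ)) = ((c + 1) + k + i) := by
        intro i _; push_cast; ring
      rw [Finset.prod_congr rfl h1, Finset.prod_congr rfl h2]
      push_cast
      ring
    calc ∑ k ∈ range (m + 1), (-1 : ℝ) ^ k * (m.choose k : ℝ) *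
          ((∏ i ∈ range (j + 1), (c + k + i)) - ∏ i ∈ range (j + 1), (c + (k + 1 : ℕ) + i))
        = -((j : ℝ) + 1) * ∑ k ∈ range (m + 1), (-1 : ℝ) ^ k * (m.choose k : ℝ) *
            ∏ i ∈ range j, ((c + 1) + k + i) := by
          rw [Finset.mul_sum]
          exact Finset.sum_congr rfl fun k _ => by rw [hpt k]; ring
      _ = if j + 1 = m + 1 then (-1 : ℝ) ^ (m + 1) * ((m + 1).factorial : ℝ) else 0 := by
          rw [ih m hjm (c + 1)]
          rcases eq_or_ne j m with h | h
          · subst h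
            simp [Nat.factorial_succ]
            push_cast
            ring
          · simp [h]
open Finset MeasureTheory

lemma Gamma_prod (t : ℝ) (ht : 0 < t) :
    ∀ j : ℕ, Real.Gamma (t + j) = Real.Gamma t * ∏ i ∈ range j, (t + i) := by
  intro j
  induction j with
  | zero => simp
  | succ j ih =>
    have h1 : t + (j + 1 : ℕ) = (t + j) + 1 := by push_cast; ring
    rw [h1, Real.Gamma_add_one (by positivity), ih, Finset.prod_range_succ]
    ring

lemma integrableOn_rpow_mul_exp (s : ℝ) (hs : -1 < s) :
    IntegrableOn (fun x : ℝ => x ^ s * Real.exp (-x)) (Set.Ioi 0) := by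
  have h := Real.GammaIntegral_convergent (by linarith : (0:ℝ) < s + 1)
  simpa [add_sub_cancel_right, mul_comm] using h

lemma integral_rpow_mul_exp (s : ℝ) (hs : -1 < s) :
    ∫ x in Set.Ioi (0:ℝ), x ^ s * Real.exp (-x) = Real.Gamma (s + 1) := by
  rw [Real.Gamma_eq_integral (by linarith : (0:ℝ) < s + 1)]
  simp only [add_sub_cancel_right]
  exact setIntegral_congr_fun measurableSet_Ioi fun x _ => mul_comm _ _

noncomputable def lagC (α : ℝ) (n k : ℕ) : ℝ :=
  ((∏ i ∈ Finset.range (n - k), (α + (k : ℝ) + 1 + (i : ℝ))) / (Nat.factorial (n - k) : ℝ))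
    * (-1 : ℝ) ^ k / (Nat.factorial k : ℝ)

lemma lagInnerSum (α : ℝ) (hα : -1 < α) (n j : ℕ) (hj : j ≤ n) :
    ∑ k ∈ range (n + 1), lagC α n k * Real.Gamma (α + j + k + 1)
      = if j = n then (-1 : ℝ) ^ n * Real.Gamma (α + n + 1) else 0 := by
  have hstep : ∀ k ∈ range (n + 1), lagC α n k * Real.Gamma (α + j + k + 1)
      = (Real.Gamma (α + n + 1) / (n.factorial : ℝ)) *
          ((-1 : ℝ) ^ k * (n.choose k : ℝ) * ∏ i ∈ range j, ((α + 1) + k + i)) := by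
    intro k hk
    have hkn : k ≤ n := by simpa [Nat.lt_succ_iff] using Finset.mem_range.mp hk
    have hpos : (0 : ℝ) < α + k + 1 := by
      have : (0:ℝ) ≤ (k:ℝ) := Nat.cast_nonneg k
      linarith
    have hGk : Real.Gamma (α + j + k + 1)
        = Real.Gamma (α + k + 1) * ∏ i ∈ range j, (α + (k : ℝ) + 1 + i) := by
      have h := Gamma_prod (α + k + 1) hpos j
      rw [show α + (j:ℝ) + k + 1 = (α + k + 1) + j by ring, h]
    have hGn : (∏ i ∈ range (n - k), (α + (k : ℝ) + 1 + i)) * Real.Gamma (α + k + 1)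
        = Real.Gamma (α + n + 1) := by
      have h := Gamma_prod (α + k + 1) hpos (n - k)
      have hc : (α + k + 1) + ((n - k : ℕ) : ℝ) = α + n + 1 := by
        rw [Nat.cast_sub hkn]; ring
      rw [hc] at h
      rw [h]; ring
    have hfact : ((n.choose k : ℕ) : ℝ) * (k.factorial : ℝ) * ((n - k).factorial : ℝ)
        = (n.factorial : ℝ) := by
      exact_mod_cast congrArg (Nat.cast : ℕ → ℝ)
        (Nat.choose_mul_factorial_mul_factorial hkn)
    have hprodeq : (∏ i ∈ range j, (α + (k : ℝ) + 1 + i))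
        = ∏ i ∈ range j, ((α + 1) + k + i) :=
      Finset.prod_congr rfl fun i _ => by ring
    have h1 : ((k.factorial : ℕ) : ℝ) ≠ 0 := Nat.cast_ne_zero.mpr k.factorial_ne_zero
    have h2 : (((n - k).factorial : ℕ) : ℝ) ≠ 0 := Nat.cast_ne_zero.mpr (n - k).factorial_ne_zero
    have h3 : ((n.factorial : ℕ) : ℝ) ≠ 0 := Nat.cast_ne_zero.mpr n.factorial_ne_zero
    rw [lagC, hGk, hprodeq]
    field_simp
    rw [← hfact, ← hGn]
    ring
  rw [Finset.sum_congr rfl hstep, ← Finset.mul_sum, S_eq j n hj (α + 1)]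
  rcases eq_or_ne j n with h | h
  · subst h
    have h3 : ((j.factorial : ℕ) : ℝ) ≠ 0 := Nat.cast_ne_zero.mpr j.factorial_ne_zero
    simp only [if_pos rfl]
    field_simp
    simp only [if_true]
    ring
  · simp [h]

lemma combi (α : ℝ) (hα : -1 < α) (m n : ℕ) (hmn : m ≤ n) :
    ∑ j ∈ range (m + 1), ∑ k ∈ range (n + 1),
        (lagC α m j * lagC α n k) * Real.Gamma (α + j + k + 1)
      = if m = n then Real.Gamma (α + n + 1) / (n.factorial : ℝ) else 0 := by
  have houter : ∀ j ∈ range (m + 1),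
      ∑ k ∈ range (n + 1), (lagC α m j * lagC α n k) * Real.Gamma (α + j + k + 1)
        = lagC α m j * (if j = n then (-1 : ℝ) ^ n * Real.Gamma (α + n + 1) else 0) := by
    intro j hj
    have hjn : j ≤ n := le_trans (by simpa [Nat.lt_succ_iff] using Finset.mem_range.mp hj) hmn
    rw [← lagInnerSum α hα n j hjn, Finset.mul_sum]
    exact Finset.sum_congr rfl fun k _ => by ring
  rw [Finset.sum_congr rfl houter]
  rcases eq_or_ne m n with h | h
  · subst h
    simp only [if_pos rfl, mul_ite, mul_zero]
    rw [Finset.sum_ite_eq' (range (m + 1)) m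
      (fun j => lagC α m j * ((-1 : ℝ) ^ m * Real.Gamma (α + m + 1)))]
    rw [if_pos (Finset.self_mem_range_succ m)]
    have hc : lagC α m m = (-1 : ℝ) ^ m / (m.factorial : ℝ) := by
      simp [lagC, Nat.sub_self]
    rw [hc]
    have h3 : ((m.factorial : ℕ) : ℝ) ≠ 0 := Nat.cast_ne_zero.mpr m.factorial_ne_zero
    field_simp
    ring_nf
    have hsq : (((-1:ℝ)) ^ m) ^ 2 = 1 := by
      rw [← pow_mul, mul_comm, pow_mul]; norm_num
    rw [pow_mul, hsq, mul_one]
    simp only [if_true]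
    field_simp
  · have : ∀ j ∈ range (m + 1),
        lagC α m j * (if j = n then (-1 : ℝ) ^ n * Real.Gamma (α + n + 1) else 0) = 0 := by
      intro j hj
      have : j ≠ n := by
        have := Finset.mem_range.mp hj; omega
      simp [this]
    rw [Finset.sum_congr rfl this]
    simp [h]

lemma lagL_eq (n : ℕ) (α x : ℝ) : lagL n α x = ∑ k ∈ range (n + 1), lagC α n k * x ^ k := by
  unfold lagL lagC
  exact Finset.sum_congr rfl fun k _ => by rw [neg_pow]; ring

lemma laguerre_main (α : ℝ) (hα : -1 < α) (m n : ℕ) (hmn : m ≤ n) :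
    ∫ x in Set.Ioi (0 : ℝ), x ^ α * Real.exp (-x) * lagL m α x * lagL n α x
      = if m = n then Real.Gamma ((n : ℝ) + α + 1) / (Nat.factorial n : ℝ) else 0 := by
  have hpt : Set.EqOn (fun x : ℝ => x ^ α * Real.exp (-x) * lagL m α x * lagL n α x)
      (fun x : ℝ => ∑ j ∈ range (m + 1), ∑ k ∈ range (n + 1),
        (lagC α m j * lagC α n k) * (x ^ (α + j + k) * Real.exp (-x))) (Set.Ioi 0) := by
    intro x hx
    have hx0 : (0 : ℝ) < x := hx
    simp only [lagL_eq, Finset.mul_sum, Finset.sum_mul]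
    rw [Finset.sum_comm]
    refine Finset.sum_congr rfl fun j _ => ?_
    refine Finset.sum_congr rfl fun k _ => ?_
    have hxp : x ^ (α + (j : ℝ) + (k : ℝ)) = x ^ α * x ^ (j : ℕ) * x ^ (k : ℕ) := by
      rw [Real.rpow_add hx0, Real.rpow_add hx0, Real.rpow_natCast, Real.rpow_natCast]
    rw [hxp]; ring
  rw [setIntegral_congr_fun measurableSet_Ioi hpt]
  have hint : ∀ j ∈ range (m + 1), ∀ k ∈ range (n + 1),
      IntegrableOn (fun x : ℝ =>
        (lagC α m j * lagC α n k) * (x ^ (α + j + k) * Real.exp (-x))) (Set.Ioi 0) := by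
    intro j _ k _
    have hj0 : (0 : ℝ) ≤ (j : ℝ) := Nat.cast_nonneg j
    have hk0 : (0 : ℝ) ≤ (k : ℝ) := Nat.cast_nonneg k
    exact (integrableOn_rpow_mul_exp (α + j + k) (by linarith)).const_mul _
  rw [integral_finset_sum _ (fun j hj => integrable_finset_sum _ (fun k hk => hint j hj k hk))]
  have hjev : ∀ j ∈ range (m + 1),
      ∫ x in Set.Ioi (0 : ℝ), ∑ k ∈ range (n + 1),
          (lagC α m j * lagC α n k) * (x ^ (α + j + k) * Real.exp (-x))
        = ∑ k ∈ range (n + 1), (lagC α m j * lagC α n k) * Real.Gamma (α + j + k + 1) := by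
    intro j hj
    rw [integral_finset_sum _ (fun k hk => hint j hj k hk)]
    refine Finset.sum_congr rfl fun k _ => ?_
    have hj0 : (0 : ℝ) ≤ (j : ℝ) := Nat.cast_nonneg j
    have hk0 : (0 : ℝ) ≤ (k : ℝ) := Nat.cast_nonneg k
    rw [integral_const_mul _ _, integral_rpow_mul_exp (α + j + k) (by linarith)]
  rw [Finset.sum_congr rfl hjev, combi α hα m n hmn,
    show α + (n : ℝ) + 1 = (n : ℝ) + α + 1 by ring]

/-- Orthogonality of the generalized Laguerre polynomials on `[0,∞)` with respect to the
weight `x^α e^{-x}`: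
`∫_0^∞ x^α e^{-x} L_m^{(α)}(x) L_n^{(α)}(x) dx = (Γ(n+α+1)/n!) δ_{mn}` for `α > -1`. -/
theorem laguerre_orthogonality (α : ℝ) (hα : -1 < α) (m n : ℕ) :
    ∫ x in Set.Ioi (0 : ℝ), x ^ α * Real.exp (-x) * lagL m α x * lagL n α x
      = if m = n then Real.Gamma ((n : ℝ) + α + 1) / (Nat.factorial n : ℝ) else 0 := by
  rcases le_total m n with h | h
  · exact laguerre_main α hα m n h
  · have hsymm : ∫ x in Set.Ioi (0 : ℝ), x ^ α * Real.exp (-x) * lagL m α x * lagL n α x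
        = ∫ x in Set.Ioi (0 : ℝ), x ^ α * Real.exp (-x) * lagL n α x * lagL m α x :=
      setIntegral_congr_fun measurableSet_Ioi fun x _ => by ring
    rw [hsymm, laguerre_main α hα n m h]
    by_cases hnm : n = m
    · subst hnm; simp
    · rw [if_neg hnm, if_neg fun hh => hnm hh.symm]
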